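/- arXiv:2010.07893 — 3 statements merged into one kernel-verified Lean document; each statement's English description precedes it below -/
import Mathlib

section
/- For every l ∈ {1, …, L}, E[G ∇_{W^l} log π_l(H^{l-1}, H^l; W^l)] = E[G · E[∇_{W^l} log π_l(H^{l-1}, H^l; W^l) | S, A]]; that is, replacing the per-layer score by its conditional expectation given the state and the selected action leaves the expected parameter update unchanged. -/
open scoped Classical

noncomputable section

/-- Probability of an event `E` under the probability mass function `p` on a finite
sample space `Ω`. -/
def pr {Ω : Type*} [Fintype Ω] (p : Ω → ℝ) (E : Ω → Prop) : ℝ :=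
  ∑ ω, if E ω then p ω else 0

/-- Conditional expectation `E[X | E]` of `X` given the event `E`, under `p`. -/
def condExp {Ω : Type*} [Fintype Ω] (p : Ω → ℝ) (X : Ω → ℝ) (E : Ω → Prop) : ℝ :=
  (∑ ω, if E ω then p ω * X ω else 0) / pr p E

/-- Conditional expectation `E[X | E]` of a vector-valued `X` given the event `E`. -/
def condExpVec {Ω : Type*} [Fintype Ω] {V : Type*} [AddCommGroup V] [Module ℝ V]
    (p : Ω → ℝ) (X : Ω → V) (E : Ω → Prop) : V :=
  (pr p E)⁻¹ • ∑ ω, if E ω then p ω • X ω else 0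

private def wsum {Ω : Type*} [Fintype Ω] {V : Type*} [AddCommMonoid V]
    (F : Ω → V) (E : Ω → Prop) : V :=
  ∑ ω, if E ω then F ω else 0

private lemma pr_eq {Ω : Type*} [Fintype Ω] (p : Ω → ℝ) (E : Ω → Prop) :
    pr p E = wsum p E := rfl

private lemma condExp_eq {Ω : Type*} [Fintype Ω] (p : Ω → ℝ) (G : Ω → ℝ) (E : Ω → Prop) :
    condExp p G E = wsum (fun ω => p ω * G ω) E / pr p E := rfl

private lemma condExpVec_eq {Ω : Type*} [Fintype Ω] {V : Type*} [AddCommGroup V] [Module ℝ V]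
    (p : Ω → ℝ) (X : Ω → V) (E : Ω → Prop) :
    condExpVec p X E = (pr p E)⁻¹ • wsum (fun ω => p ω • X ω) E := rfl

private lemma wsum_congr {Ω : Type*} [Fintype Ω] {V : Type*} [AddCommMonoid V]
    (F : Ω → V) {E E' : Ω → Prop} (h : ∀ ω, E ω ↔ E' ω) : wsum F E = wsum F E' :=
  Finset.sum_congr rfl fun ω _ => if_congr (h ω) rfl rfl

private lemma wsum_smul {Ω : Type*} [Fintype Ω] {V : Type*} [AddCommGroup V] [Module ℝ V]
    (r : Ω → ℝ) (v : V) (E : Ω → Prop) :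
    wsum (fun ω => r ω • v) E = wsum r E • v := by
  unfold wsum
  rw [Finset.sum_smul]
  refine Finset.sum_congr rfl fun ω _ => ?_
  split_ifs <;> simp

private lemma wsum_zero {Ω : Type*} [Fintype Ω] {V : Type*} [AddCommMonoid V]
    (F : Ω → V) (E : Ω → Prop) (h : ∀ ω, E ω → F ω = 0) : wsum F E = 0 := by
  unfold wsum
  refine Finset.sum_eq_zero fun ω _ => ?_
  split_ifs with hω
  exacts [h ω hω, rfl]

private lemma pr_zero {Ω : Type*} [Fintype Ω] (p : Ω → ℝ) (hp : ∀ ω, 0 ≤ p ω)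
    (E : Ω → Prop) (h : pr p E = 0) : ∀ ω, E ω → p ω = 0 := by
  intro ω hω
  have h0 : ∀ x ∈ (Finset.univ : Finset Ω), 0 ≤ if E x then p x else 0 := by
    intro x _; split_ifs; exacts [hp x, le_rfl]
  have := (Finset.sum_eq_zero_iff_of_nonneg h0).mp h ω (Finset.mem_univ ω)
  simpa [hω] using this

private lemma sum_key {Ω K : Type*} [Fintype Ω] [Fintype K] {V : Type*} [AddCommMonoid V]
    (key : Ω → K) (F : Ω → V) :
    ∑ ω, F ω = ∑ k, wsum F (fun ω => key ω = k) := by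
  unfold wsum
  rw [Finset.sum_comm]
  exact Finset.sum_congr rfl fun ω _ => by simp

private lemma key_group {Ω K : Type*} [Fintype Ω] [Fintype K] {V : Type*}
    [AddCommGroup V] [Module ℝ V]
    (key : Ω → K) (p : Ω → ℝ) (Fk : K → V) (C : K → Prop) :
    wsum (fun ω => p ω • Fk (key ω)) (fun ω => C (key ω))
      = wsum (fun k => wsum p (fun ω => key ω = k) • Fk k) C := by
  have step : ∀ k, (if C k then (∑ ω, if key ω = k then p ω else 0) • Fk k else 0)
      = ∑ ω, if key ω = k ∧ C k then p ω • Fk k else 0 := by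
    intro k
    by_cases hk : C k
    · rw [if_pos hk, Finset.sum_smul]
      refine Finset.sum_congr rfl fun ω _ => ?_
      by_cases h : key ω = k
      · rw [if_pos h, if_pos ⟨h, hk⟩]
      · rw [if_neg h, if_neg (fun hh => h hh.1), zero_smul]
    · rw [if_neg hk]
      exact (Finset.sum_eq_zero fun ω _ => by rw [if_neg (fun hh => hk hh.2)]).symm
  have main : (∑ k, if C k then (∑ ω, if key ω = k then p ω else 0) • Fk k else 0)
      = ∑ ω, if C (key ω) then p ω • Fk (key ω) else 0 := by
    calc (∑ k, if C k then (∑ ω, if key ω = k then p ω else 0) • Fk k else 0)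
        = ∑ k, ∑ ω, if key ω = k ∧ C k then p ω • Fk k else 0 :=
          Finset.sum_congr rfl fun k _ => step k
      _ = ∑ ω, ∑ k, if key ω = k ∧ C k then p ω • Fk k else 0 := Finset.sum_comm
      _ = ∑ ω, if C (key ω) then p ω • Fk (key ω) else 0 := by
          refine Finset.sum_congr rfl fun ω _ => ?_
          rw [Finset.sum_eq_single (key ω)]
          · by_cases hk : C (key ω)
            · rw [if_pos (show key ω = key ω ∧ C (key ω) from ⟨rfl, hk⟩), if_pos hk]
            · rw [if_neg (show ¬(key ω = key ω ∧ C (key ω)) from fun hh => hk hh.2), if_neg hk]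
          · exact fun k _ hne => if_neg (fun hh => hne hh.1.symm)
          · exact fun hmem => absurd (Finset.mem_univ _) hmem
  exact main.symm

private lemma wsum_pair {K S A : Type*} [Fintype K] {V : Type*}
    [AddCommGroup V] [Module ℝ V]
    (ks : K → S) (ka : K → A) (g : S → A → ℝ) (v : K → V) (sa : S × A) :
    wsum (fun k => g (ks k) (ka k) • v k) (fun k => (ks k, ka k) = sa)
      = g sa.1 sa.2 • wsum v (fun k => ks k = sa.1 ∧ ka k = sa.2) := by
  unfold wsum
  rw [Finset.smul_sum]
  refine Finset.sum_congr rfl fun k _ => ?_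
  beta_reduce
  by_cases h : (ks k, ka k) = sa
  · have h1 : ks k = sa.1 := congrArg Prod.fst h
    have h2 : ka k = sa.2 := congrArg Prod.snd h
    rw [if_pos h, if_pos ⟨h1, h2⟩, h1, h2]
  · have h' : ¬(ks k = sa.1 ∧ ka k = sa.2) := by
      intro hh
      exact h (by rw [hh.1, hh.2])
    rw [if_neg h, if_neg h', smul_zero]

private lemma core {Ω K S A : Type*} [Fintype Ω] [Fintype K] [Fintype S] [Fintype A]
    {V : Type*} [AddCommGroup V] [Module ℝ V]
    (p : Ω → ℝ) (hp0 : ∀ ω, 0 ≤ p ω) (G : Ω → ℝ)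
    (key : Ω → K) (s0 : Ω → S) (a0 : Ω → A) (Xk : K → V) (ks : K → S) (ka : K → A)
    (hks : ∀ ω, ks (key ω) = s0 ω) (hka : ∀ ω, ka (key ω) = a0 ω)
    (E : K → Ω → Prop) (hE : ∀ k ω, E k ω ↔ key ω = k)
    (hG : ∀ k, pr p (E k) ≠ 0 →
      condExp p G (E k) = condExp p G (fun ω => s0 ω = ks k ∧ a0 ω = ka k)) :
    ∑ ω, (p ω * G ω) • Xk (key ω)
      = ∑ ω, (p ω * G ω) • condExpVec p (fun ω' => Xk (key ω'))
          (fun ω' => s0 ω' = s0 ω ∧ a0 ω' = a0 ω) := by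
  set g : S → A → ℝ := fun s a => condExp p G (fun ω => s0 ω = s ∧ a0 ω = a) with hgdef
  have hprE : ∀ k, pr p (E k) = wsum p (fun ω => key ω = k) :=
    fun k => (pr_eq p (E k)).trans (wsum_congr p (hE k))
  -- value of the weighted indicator sum of p * G on a fiber of key
  have hc : ∀ k, wsum (fun ω => p ω * G ω) (fun ω => key ω = k)
      = pr p (E k) * g (ks k) (ka k) := by
    intro k
    by_cases h : pr p (E k) = 0
    · rw [h, zero_mul]
      refine wsum_zero _ _ fun ω hω => ?_
      rw [pr_zero p hp0 (E k) h ω ((hE k ω).mpr hω), zero_mul]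
    · have e : wsum (fun ω => p ω * G ω) (fun ω => key ω = k)
          = wsum (fun ω => p ω * G ω) (E k) := (wsum_congr _ (hE k)).symm
      rw [e]
      simp only [hgdef]
      rw [← hG k h, condExp_eq, mul_comm, div_mul_cancel₀ _ h]
  -- same on a fiber of (s0, a0)
  have hc' : ∀ (s : S) (a : A), wsum (fun ω => p ω * G ω) (fun ω => s0 ω = s ∧ a0 ω = a)
      = pr p (fun ω => s0 ω = s ∧ a0 ω = a) * g s a := by
    intro s a
    by_cases h : pr p (fun ω => s0 ω = s ∧ a0 ω = a) = 0
    · rw [h, zero_mul]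
      exact wsum_zero _ _ fun ω hω => by rw [pr_zero p hp0 _ h ω hω, zero_mul]
    · simp only [hgdef]
      rw [condExp_eq, mul_comm, div_mul_cancel₀ _ h]
  have e1 : ∀ k, wsum (fun ω => (p ω * G ω) • Xk (key ω)) (fun ω => key ω = k)
      = wsum (fun ω => p ω * G ω) (fun ω => key ω = k) • Xk k := by
    intro k
    rw [← wsum_smul]
    unfold wsum
    refine Finset.sum_congr rfl fun ω _ => ?_
    beta_reduce
    by_cases h : key ω = k
    · rw [if_pos h, if_pos h, h]
    · rw [if_neg h, if_neg h]
  -- LHS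
  have hLHS : ∑ ω, (p ω * G ω) • Xk (key ω)
      = ∑ sa : S × A, g sa.1 sa.2 •
          wsum (fun ω => p ω • Xk (key ω)) (fun ω => s0 ω = sa.1 ∧ a0 ω = sa.2) := by
    calc ∑ ω, (p ω * G ω) • Xk (key ω)
        = ∑ k, wsum (fun ω => (p ω * G ω) • Xk (key ω)) (fun ω => key ω = k) :=
          sum_key key _
      _ = ∑ k, g (ks k) (ka k) • (wsum p (fun ω => key ω = k) • Xk k) := by
          refine Finset.sum_congr rfl fun k _ => ?_
          rw [e1 k, hc k, hprE k, mul_comm, mul_smul]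
      _ = ∑ sa : S × A, wsum (fun k => g (ks k) (ka k) • (wsum p (fun ω => key ω = k) • Xk k))
            (fun k => (ks k, ka k) = sa) := sum_key (fun k => (ks k, ka k)) _
      _ = ∑ sa : S × A, g sa.1 sa.2 •
            wsum (fun k => wsum p (fun ω => key ω = k) • Xk k)
              (fun k => ks k = sa.1 ∧ ka k = sa.2) :=
          Finset.sum_congr rfl fun sa _ => wsum_pair ks ka g _ sa
      _ = ∑ sa : S × A, g sa.1 sa.2 •
            wsum (fun ω => p ω • Xk (key ω)) (fun ω => s0 ω = sa.1 ∧ a0 ω = sa.2) := by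
          refine Finset.sum_congr rfl fun sa _ => ?_
          rw [← key_group key p Xk (fun k => ks k = sa.1 ∧ ka k = sa.2)]
          congr 1
          exact (wsum_congr _ fun ω => by rw [hks ω, hka ω]).symm
  -- RHS
  have hRHS : ∑ ω, (p ω * G ω) • condExpVec p (fun ω' => Xk (key ω'))
        (fun ω' => s0 ω' = s0 ω ∧ a0 ω' = a0 ω)
      = ∑ sa : S × A, g sa.1 sa.2 •
          wsum (fun ω => p ω • Xk (key ω)) (fun ω => s0 ω = sa.1 ∧ a0 ω = sa.2) := by
    rw [sum_key (fun ω => (s0 ω, a0 ω)) _]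
    refine Finset.sum_congr rfl fun sa _ => ?_
    have e2 : wsum (fun ω => (p ω * G ω) • condExpVec p (fun ω' => Xk (key ω'))
          (fun ω' => s0 ω' = s0 ω ∧ a0 ω' = a0 ω)) (fun ω => (s0 ω, a0 ω) = sa)
        = wsum (fun ω => p ω * G ω) (fun ω => s0 ω = sa.1 ∧ a0 ω = sa.2) •
            condExpVec p (fun ω' => Xk (key ω')) (fun ω' => s0 ω' = sa.1 ∧ a0 ω' = sa.2) := by
      rw [← wsum_smul]
      unfold wsum
      refine Finset.sum_congr rfl fun ω _ => ?_
      beta_reduce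
      by_cases h : (s0 ω, a0 ω) = sa
      · have h1 : s0 ω = sa.1 := congrArg Prod.fst h
        have h2 : a0 ω = sa.2 := congrArg Prod.snd h
        rw [if_pos h, if_pos ⟨h1, h2⟩, h1, h2]
      · have h' : ¬(s0 ω = sa.1 ∧ a0 ω = sa.2) := fun hh => h (by rw [hh.1, hh.2])
        rw [if_neg h, if_neg h']
    rw [e2, hc' sa.1 sa.2, condExpVec_eq]
    by_cases h : pr p (fun ω => s0 ω = sa.1 ∧ a0 ω = sa.2) = 0
    · rw [h, zero_mul, zero_smul,
        wsum_zero (fun ω => p ω • Xk (key ω)) _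
          (fun ω hω => by
            show p ω • Xk (key ω) = 0
            rw [pr_zero p hp0 _ h ω hω, zero_smul]),
        smul_zero]
    · rw [smul_smul, mul_comm (pr p _) (g sa.1 sa.2), mul_assoc, mul_inv_cancel₀ h, mul_one]
  rw [hLHS]
  exact hRHS.symm

/-- For a multi-layer network of stochastic units (`H^0 = S`, `H^L = A`,
layer conditionals `π_l` strictly positive, normalized and differentiable in `W^l`, layers
forming a Markov chain) and a return `G` that is conditionally independent of the hidden
layers given `(S, A)`: for every `l ∈ {1, …, L}`,
`E[G ∇_{W^l} log π_l(H^{l-1}, H^l; W^l)]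
   = E[G · E[∇_{W^l} log π_l(H^{l-1}, H^l; W^l) | S, A]]`. -/
theorem stmt1 (Ω : Type*) [Fintype Ω] (p : Ω → ℝ)
    (hp0 : ∀ ω, 0 ≤ p ω) (hp1 : ∑ ω, p ω = 1)
    (L : ℕ) (hL : 1 ≤ L) (T : ℕ → Type*) [∀ l, Fintype (T l)] [∀ l, Nonempty (T l)]
    (d : ℕ → ℕ)
    (π : (l : ℕ) → T (l - 1) → T l → EuclideanSpace ℝ (Fin (d l)) → ℝ)
    (W : (l : ℕ) → EuclideanSpace ℝ (Fin (d l)))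
    (H : (l : ℕ) → Ω → T l) (G : Ω → ℝ)
    (hpos : ∀ l ∈ Finset.Icc 1 L, ∀ x y w, 0 < π l x y w)
    (hdiff : ∀ l ∈ Finset.Icc 1 L, ∀ x y, Differentiable ℝ (π l x y))
    (hnorm : ∀ l ∈ Finset.Icc 1 L, ∀ x w, ∑ y, π l x y w = 1)
    (hMarkov : ∀ τ : ((l : Fin (L + 1)) → T l.1),
      pr p (fun ω => ∀ l : Fin (L + 1), H l.1 ω = τ l)
        = pr p (fun ω => H 0 ω = τ ⟨0, Nat.succ_pos L⟩) *
            ∏ l : Fin L, π (l.1 + 1) (τ l.castSucc) (τ l.succ) (W (l.1 + 1)))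
    (hG : ∀ τ : ((l : Fin (L + 1)) → T l.1),
      pr p (fun ω => ∀ l : Fin (L + 1), H l.1 ω = τ l) ≠ 0 →
        condExp p G (fun ω => ∀ l : Fin (L + 1), H l.1 ω = τ l)
          = condExp p G (fun ω => H 0 ω = τ ⟨0, Nat.succ_pos L⟩ ∧ H L ω = τ (Fin.last L)))
    (l : ℕ) (hl : l ∈ Finset.Icc 1 L) :
    ∑ ω, (p ω * G ω) •
        gradient (fun w => Real.log (π l (H (l - 1) ω) (H l ω) w)) (W l)
      = ∑ ω, (p ω * G ω) •
          condExpVec p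
            (fun ω' => gradient (fun w => Real.log (π l (H (l - 1) ω') (H l ω') w)) (W l))
            (fun ω' => H 0 ω' = H 0 ω ∧ H L ω' = H L ω) := by
  obtain ⟨hl1, hlL⟩ := Finset.mem_Icc.mp hl
  have hlm : l - 1 < L + 1 := by omega
  have hll : l < L + 1 := by omega
  exact core p hp0 G (fun ω (j : Fin (L + 1)) => H j.1 ω) (H 0) (H L)
    (fun τ => gradient (fun w => Real.log (π l (τ ⟨l - 1, hlm⟩) (τ ⟨l, hll⟩) w)) (W l))
    (fun τ => τ ⟨0, Nat.succ_pos L⟩) (fun τ => τ (Fin.last L))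
    (fun ω => rfl) (fun ω => rfl)
    (fun τ ω => ∀ j : Fin (L + 1), H j.1 ω = τ j)
    (fun τ ω => funext_iff.symm)
    hG

end
end

section
/- Suppose ∇_h E(ĥ; s, a) = 0 at ĥ = (ĥ^1, …, ĥ^{L-1}), and let ẑ = (ẑ^1, …, ẑ^{L-1}) be the unique noise vector with ĥ = h(ẑ; W, s), i.e. ẑ^l = (ĥ^l − g^l(ĥ^{l-1}; W^l))/σ_l for l = 1, …, L−1 (with ĥ^0 = s). Then for every l ∈ {1, …, L}, writing ĥ^L = a, the REINFORCE parameter gradient equals the reparametrized backpropagation parameter gradient: ∇_{W^l} log π_l(ĥ^{l-1}, ĥ^l; W^l) = ∇_{W^l} log π_L(h^{L-1}(ẑ; W, s), a; W^L). -/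
open InnerProductSpace

section helpers
variable {E F : Type*} [NormedAddCommGroup E] [InnerProductSpace ℝ E] [CompleteSpace E]
  [NormedAddCommGroup F] [InnerProductSpace ℝ F] [CompleteSpace F]

theorem HasGradientAt.comp_hasFDerivAt' {φ : E → F} {Φ : E →L[ℝ] F} {f : F → ℝ} {v : F} {x : E}
    (hφ : HasFDerivAt φ Φ x) (hf : HasGradientAt f v (φ x)) :
    HasGradientAt (fun e => f (φ e)) (Φ.adjoint v) x := by
  have h := hf.hasFDerivAt.comp x hφ
  have key : (toDual ℝ F v).comp Φ = toDual ℝ E (Φ.adjoint v) := by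
    ext u
    simp [toDual_apply_apply, ContinuousLinearMap.adjoint_inner_left]
  rw [hasGradientAt_iff_hasFDerivAt, ← key]
  exact h

theorem HasGradientAt.add' {f g : E → ℝ} {v w x : E}
    (hf : HasGradientAt f v x) (hg : HasGradientAt g w x) :
    HasGradientAt (fun y => f y + g y) (v + w) x := by
  have h := hf.hasFDerivAt.add hg.hasFDerivAt
  rw [hasGradientAt_iff_hasFDerivAt, map_add]
  exact h

theorem HasGradientAt.neg' {f : E → ℝ} {v x : E} (hf : HasGradientAt f v x) :
    HasGradientAt (fun y => -f y) (-v) x := by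
  have h := hf.hasFDerivAt.neg
  rw [hasGradientAt_iff_hasFDerivAt, map_neg]
  exact h

theorem HasGradientAt.add_const' {f : E → ℝ} {v x : E} (c : ℝ) (hf : HasGradientAt f v x) :
    HasGradientAt (fun y => f y + c) v x :=
  hf.hasFDerivAt.add_const c

theorem HasGradientAt.const_add' {f : E → ℝ} {v x : E} (c : ℝ) (hf : HasGradientAt f v x) :
    HasGradientAt (fun y => c + f y) v x :=
  hf.hasFDerivAt.const_add c

/-- gradient of `y ↦ -‖y - μ‖^2 / (2 c)` is `-c⁻¹ • (x - μ)`. -/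
theorem hasGradientAt_neg_norm_sub_sq_div (c : ℝ) (μ x : E) :
    HasGradientAt (fun y : E => -‖y - μ‖ ^ 2 / (2 * c)) (-c⁻¹ • (x - μ)) x := by
  have h1 : HasFDerivAt (fun y : E => ‖y - μ‖ ^ 2)
      ((2:ℕ) • (innerSL ℝ (x - μ)).comp (ContinuousLinearMap.id ℝ E)) x :=
    ((hasFDerivAt_id x).sub_const μ).norm_sq
  have h2 := h1.const_mul (-(2 * c)⁻¹)
  have key : (-(2 * c)⁻¹) • ((2:ℕ) • (innerSL ℝ (x - μ)).comp (ContinuousLinearMap.id ℝ E))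
      = toDual ℝ E (-c⁻¹ • (x - μ)) := by
    ext u
    simp only [ContinuousLinearMap.smul_apply, ContinuousLinearMap.coe_comp', Function.comp_apply,
      ContinuousLinearMap.coe_id', id_eq, toDual_apply_apply, innerSL_apply_apply, smul_eq_mul]
    rw [real_inner_smul_left]
    show -(2*c)⁻¹ * ((2:ℕ) • (inner ℝ (x - μ) u : ℝ)) = -c⁻¹ * inner ℝ (x-μ) u
    rw [nsmul_eq_mul]
    push_cast
    rcases eq_or_ne c 0 with rfl | hc
    · simp
    · field_simp
  rw [hasGradientAt_iff_hasFDerivAt, ← key]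
  convert h2 using 2 with y
  · rfl
  · ring

end helpers


/-- The multivariate Gaussian density on `ℝⁿ` with mean `μ` and covariance `σ² I`. -/
noncomputable def gaussDensity {n : ℕ} (σ : ℝ) (μ y : EuclideanSpace ℝ (Fin n)) : ℝ :=
  (Real.sqrt (2 * Real.pi * σ ^ 2))⁻¹ ^ n * Real.exp (-‖y - μ‖ ^ 2 / (2 * σ ^ 2))

theorem log_gaussDensity {m : ℕ} {σ : ℝ} (hσ : σ ≠ 0) (μ y : EuclideanSpace ℝ (Fin m)) :
    Real.log (gaussDensity σ μ y)
      = m * Real.log ((Real.sqrt (2 * Real.pi * σ ^ 2))⁻¹) + -‖y - μ‖ ^ 2 / (2 * σ ^ 2) := by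
  have hpos : 0 < 2 * Real.pi * σ ^ 2 := by positivity
  have hne : (Real.sqrt (2 * Real.pi * σ ^ 2))⁻¹ ≠ 0 :=
    inv_ne_zero (ne_of_gt (Real.sqrt_pos.2 hpos))
  rw [gaussDensity, Real.log_mul (pow_ne_zero _ hne) (Real.exp_ne_zero _), Real.log_pow,
    Real.log_exp]

theorem hasGradientAt_log_gauss_y {m : ℕ} {σ : ℝ} (hσ : σ ≠ 0)
    (μ x : EuclideanSpace ℝ (Fin m)) :
    HasGradientAt (fun y => Real.log (gaussDensity σ μ y)) (-(σ ^ 2)⁻¹ • (x - μ)) x := by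
  have hfun : (fun y : EuclideanSpace ℝ (Fin m) => Real.log (gaussDensity σ μ y))
      = fun y => (m : ℝ) * Real.log ((Real.sqrt (2 * Real.pi * σ ^ 2))⁻¹)
          + -‖y - μ‖ ^ 2 / (2 * σ ^ 2) :=
    funext fun y => log_gaussDensity hσ μ y
  rw [hfun]
  exact (hasGradientAt_neg_norm_sub_sq_div (σ ^ 2) μ x).const_add' _

theorem hasGradientAt_log_gauss_mu {m : ℕ} {σ : ℝ} (hσ : σ ≠ 0)
    (ν x : EuclideanSpace ℝ (Fin m)) :
    HasGradientAt (fun μ => Real.log (gaussDensity σ μ ν)) ((σ ^ 2)⁻¹ • (ν - x)) x := by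
  have hfun : (fun μ : EuclideanSpace ℝ (Fin m) => Real.log (gaussDensity σ μ ν))
      = fun μ => (m : ℝ) * Real.log ((Real.sqrt (2 * Real.pi * σ ^ 2))⁻¹)
          + -‖μ - ν‖ ^ 2 / (2 * σ ^ 2) := by
    funext μ
    rw [log_gaussDensity hσ μ ν, norm_sub_rev]
  rw [hfun]
  have h := (hasGradientAt_neg_norm_sub_sq_div (σ ^ 2) ν x).const_add'
    ((m : ℝ) * Real.log ((Real.sqrt (2 * Real.pi * σ ^ 2))⁻¹))
  have hv : -(σ ^ 2)⁻¹ • (x - ν) = (σ ^ 2)⁻¹ • (ν - x) := by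
    rw [neg_smul, ← smul_neg, neg_sub]
  rwa [hv] at h


/-- The reparametrization `h^k(z; V, s)`: `h^0(z; V, s) = s` and
`h^{k+1}(z; V, s) = g^{k+1}(h^k(z; V, s); V^{k+1}) + σ_{k+1} z^{k+1}`. -/
noncomputable def reparam (n dpar : ℕ → ℕ)
    (g : (l : ℕ) → EuclideanSpace ℝ (Fin (dpar l)) →
      EuclideanSpace ℝ (Fin (n (l - 1))) → EuclideanSpace ℝ (Fin (n l)))
    (σ : ℕ → ℝ) (V : (l : ℕ) → EuclideanSpace ℝ (Fin (dpar l)))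
    (s : EuclideanSpace ℝ (Fin (n 0))) (z : (l : ℕ) → EuclideanSpace ℝ (Fin (n l))) :
    (k : ℕ) → EuclideanSpace ℝ (Fin (n k))
  | 0 => s
  | (k + 1) => g (k + 1) (V (k + 1)) (reparam n dpar g σ V s z k) + σ (k + 1) • z (k + 1)

/-- **Theorem 2 of the paper.** In a multi-layer network of stochastic units
whose hidden layers are normally distributed,
`π_l(h^{l-1}, h^l; W^l) = N(h^l; g^l(h^{l-1}; W^l), σ_l² I)` for `l ∈ {1, …, L−1}`, with a
strictly positive output density `π_L(h^{L-1}, a; W^L)` differentiable in `h^{L-1}` and `W^L`,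
and energy `E(h; s, a) = −∑_{l=1}^{L} log π_l(h^{l-1}, h^l; W^l) + C(s, a)`: suppose
`∇_h E(ĥ; s, a) = 0` (with `ĥ^0 = s`), and let `ẑ` be the unique noise vector with
`ĥ = h(ẑ; W, s)`, i.e. `ẑ^l = (ĥ^l − g^l(ĥ^{l-1}; W^l))/σ_l` for `l = 1, …, L−1`.  Then for
every `l ∈ {1, …, L}` (the cases `l ≤ L−1` and `l = L` are the two conjuncts), the REINFORCE
parameter gradient equals the reparametrized backpropagation parameter gradient:
`∇_{W^l} log π_l(ĥ^{l-1}, ĥ^l; W^l) = ∇_{W^l} log π_L(h^{L-1}(ẑ; W, s), a; W^L)`. -/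
theorem stmt4 (L : ℕ) (hL : 1 ≤ L) (n dpar : ℕ → ℕ)
    (g : (l : ℕ) → EuclideanSpace ℝ (Fin (dpar l)) →
      EuclideanSpace ℝ (Fin (n (l - 1))) → EuclideanSpace ℝ (Fin (n l)))
    (σ : ℕ → ℝ) (hσ : ∀ l ∈ Finset.Icc 1 (L - 1), 0 < σ l)
    (hgdiff₁ : ∀ l ∈ Finset.Icc 1 (L - 1), ∀ w, Differentiable ℝ (g l w))
    (hgdiff₂ : ∀ l ∈ Finset.Icc 1 (L - 1), ∀ x, Differentiable ℝ (fun w => g l w x))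
    (α : Type*)
    (πL : EuclideanSpace ℝ (Fin (dpar L)) → EuclideanSpace ℝ (Fin (n (L - 1))) → α → ℝ)
    (hπLpos : ∀ w x b, 0 < πL w x b)
    (hπLdiff₁ : ∀ w b, Differentiable ℝ (fun x => πL w x b))
    (hπLdiff₂ : ∀ x b, Differentiable ℝ (fun w => πL w x b))
    (W : (l : ℕ) → EuclideanSpace ℝ (Fin (dpar l)))
    (s : EuclideanSpace ℝ (Fin (n 0))) (a : α) (C : ℝ)
    (hhat : (l : ℕ) → EuclideanSpace ℝ (Fin (n l))) (hs : hhat 0 = s)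
    (hstat : ∀ k ∈ Finset.Icc 1 (L - 1),
      gradient (fun x : EuclideanSpace ℝ (Fin (n k)) =>
        -((∑ j ∈ Finset.Icc 1 (L - 1),
            Real.log (gaussDensity (σ j) (g j (W j) (Function.update hhat k x (j - 1)))
              (Function.update hhat k x j)))
          + Real.log (πL (W L) (Function.update hhat k x (L - 1)) a)) + C) (hhat k) = 0)
    (zhat : (l : ℕ) → EuclideanSpace ℝ (Fin (n l)))
    (hzhat : ∀ k ∈ Finset.Icc 1 (L - 1),
      zhat k = (σ k)⁻¹ • (hhat k - g k (W k) (hhat (k - 1)))) :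
    (∀ l ∈ Finset.Icc 1 (L - 1),
      gradient (fun w => Real.log (gaussDensity (σ l) (g l w (hhat (l - 1))) (hhat l))) (W l)
        = gradient (fun w : EuclideanSpace ℝ (Fin (dpar l)) =>
            Real.log (πL (W L)
              (reparam n dpar g σ (Function.update W l w) s zhat (L - 1)) a)) (W l))
    ∧ gradient (fun w => Real.log (πL w (hhat (L - 1)) a)) (W L)
        = gradient (fun w =>
            Real.log (πL w (reparam n dpar g σ W s zhat (L - 1)) a)) (W L) := by
  classical
  have hσ' : ∀ k ∈ Finset.Icc 1 (L - 1), σ k ≠ 0 := fun k hk => (hσ k hk).ne'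
  -- reparametrization reproduces hhat
  have reparamW : ∀ (V : (l : ℕ) → EuclideanSpace ℝ (Fin (dpar l))), ∀ k, k ≤ L - 1 →
      (∀ j, 1 ≤ j → j ≤ k → V j = W j) →
      reparam n dpar g σ V s zhat k = hhat k := by
    intro V k
    induction k with
    | zero => intro _ _; exact hs.symm
    | succ m ih =>
      intro hk hV
      have hm : m + 1 ∈ Finset.Icc 1 (L - 1) := Finset.mem_Icc.2 ⟨Nat.le_add_left 1 m, hk⟩
      show g (m + 1) (V (m + 1)) (reparam n dpar g σ V s zhat m) + σ (m + 1) • zhat (m + 1)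
          = hhat (m + 1)
      rw [ih (le_trans (Nat.le_succ m) hk) (fun j h1 h2 => hV j h1 (h2.trans (Nat.le_succ m))),
        hV (m + 1) (Nat.le_add_left 1 m) le_rfl, hzhat (m + 1) hm,
        smul_inv_smul₀ (hσ' _ hm)]
      simp
  -- stationarity recursion for hidden layers
  have hrec : ∀ k, 1 ≤ k → k + 1 ≤ L - 1 →
      (fderiv ℝ (g (k + 1) (W (k + 1))) (hhat k)).adjoint
          ((σ (k + 1) ^ 2)⁻¹ • (hhat (k + 1) - g (k + 1) (W (k + 1)) (hhat k)))
        = (σ k ^ 2)⁻¹ • (hhat k - g k (W k) (hhat (k - 1))) := by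
    intro k hk1 hk2
    have hkmem : k ∈ Finset.Icc 1 (L - 1) := Finset.mem_Icc.2 ⟨hk1, by omega⟩
    have hk1mem : k + 1 ∈ Finset.Icc 1 (L - 1) := Finset.mem_Icc.2 ⟨by omega, hk2⟩
    have hbig := hstat k hkmem
    have hfun : (fun x : EuclideanSpace ℝ (Fin (n k)) =>
        -((∑ j ∈ Finset.Icc 1 (L - 1),
            Real.log (gaussDensity (σ j) (g j (W j) (Function.update hhat k x (j - 1)))
              (Function.update hhat k x j)))
          + Real.log (πL (W L) (Function.update hhat k x (L - 1)) a)) + C)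
      = fun x =>
        (-Real.log (gaussDensity (σ k) (g k (W k) (hhat (k - 1))) x) +
         -Real.log (gaussDensity (σ (k + 1)) (g (k + 1) (W (k + 1)) x) (hhat (k + 1)))) +
        (-((∑ j ∈ ((Finset.Icc 1 (L - 1)).erase k).erase (k + 1),
            Real.log (gaussDensity (σ j) (g j (W j) (hhat (j - 1))) (hhat j)))
          + Real.log (πL (W L) (hhat (L - 1)) a)) + C) := by
      funext x
      have hk1mem' : k + 1 ∈ (Finset.Icc 1 (L - 1)).erase k :=
        Finset.mem_erase.2 ⟨by omega, hk1mem⟩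
      rw [← Finset.add_sum_erase _ _ hkmem, ← Finset.add_sum_erase _ _ hk1mem']
      have hRest : ∑ j ∈ ((Finset.Icc 1 (L - 1)).erase k).erase (k + 1),
            Real.log (gaussDensity (σ j) (g j (W j) (Function.update hhat k x (j - 1)))
              (Function.update hhat k x j))
          = ∑ j ∈ ((Finset.Icc 1 (L - 1)).erase k).erase (k + 1),
            Real.log (gaussDensity (σ j) (g j (W j) (hhat (j - 1))) (hhat j)) := by
        refine Finset.sum_congr rfl fun j hj => ?_
        have hja := Finset.mem_erase.1 hj
        have hjb := Finset.mem_erase.1 hja.2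
        have hj1 : 1 ≤ j := (Finset.mem_Icc.1 hjb.2).1
        rw [Function.update_of_ne hjb.1, Function.update_of_ne (by omega : j - 1 ≠ k)]
      rw [hRest]
      have e4 : Function.update hhat k x (k + 1 - 1) = x := Function.update_self k x hhat
      rw [e4, Function.update_self, Function.update_of_ne (by omega : k - 1 ≠ k),
        Function.update_of_ne (by omega : k + 1 ≠ k),
        Function.update_of_ne (by omega : L - 1 ≠ k)]
      ring
    rw [hfun] at hbig
    have hg1 := hasGradientAt_log_gauss_y (hσ' k hkmem) (g k (W k) (hhat (k - 1))) (hhat k)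
    have hg2 := HasGradientAt.comp_hasFDerivAt'
      ((hgdiff₁ (k + 1) hk1mem (W (k + 1)) (hhat k)).hasFDerivAt)
      (hasGradientAt_log_gauss_mu (hσ' _ hk1mem) (hhat (k + 1)) (g (k + 1) (W (k + 1)) (hhat k)))
    have hG := (hg1.neg'.add' hg2.neg').add_const'
      (-((∑ j ∈ ((Finset.Icc 1 (L - 1)).erase k).erase (k + 1),
          Real.log (gaussDensity (σ j) (g j (W j) (hhat (j - 1))) (hhat j)))
        + Real.log (πL (W L) (hhat (L - 1)) a)) + C)
    rw [hG.gradient] at hbig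
    have hnn : -(-(σ k ^ 2)⁻¹ • (hhat k - g k (W k) (hhat (k - 1))))
        = (σ k ^ 2)⁻¹ • (hhat k - g k (W k) (hhat (k - 1))) := by
      rw [neg_smul, neg_neg]
    rw [hnn, add_neg_eq_zero] at hbig
    exact hbig.symm
  -- stationarity at the last hidden layer
  have hlast : 1 ≤ L - 1 →
      gradient (fun x => Real.log (πL (W L) x a)) (hhat (L - 1))
        = (σ (L - 1) ^ 2)⁻¹ • (hhat (L - 1) - g (L - 1) (W (L - 1)) (hhat (L - 1 - 1))) := by
    intro hL2
    have hkmem : L - 1 ∈ Finset.Icc 1 (L - 1) := Finset.mem_Icc.2 ⟨hL2, le_rfl⟩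
    have hbig := hstat (L - 1) hkmem
    have hfun : (fun x : EuclideanSpace ℝ (Fin (n (L - 1))) =>
        -((∑ j ∈ Finset.Icc 1 (L - 1),
            Real.log (gaussDensity (σ j) (g j (W j) (Function.update hhat (L - 1) x (j - 1)))
              (Function.update hhat (L - 1) x j)))
          + Real.log (πL (W L) (Function.update hhat (L - 1) x (L - 1)) a)) + C)
      = fun x =>
        (-Real.log (gaussDensity (σ (L - 1)) (g (L - 1) (W (L - 1)) (hhat (L - 1 - 1))) x) +
         -Real.log (πL (W L) x a)) +
        (-(∑ j ∈ (Finset.Icc 1 (L - 1)).erase (L - 1),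
            Real.log (gaussDensity (σ j) (g j (W j) (hhat (j - 1))) (hhat j))) + C) := by
      funext x
      rw [← Finset.add_sum_erase _ _ hkmem]
      have hRest : ∑ j ∈ (Finset.Icc 1 (L - 1)).erase (L - 1),
            Real.log (gaussDensity (σ j) (g j (W j) (Function.update hhat (L - 1) x (j - 1)))
              (Function.update hhat (L - 1) x j))
          = ∑ j ∈ (Finset.Icc 1 (L - 1)).erase (L - 1),
            Real.log (gaussDensity (σ j) (g j (W j) (hhat (j - 1))) (hhat j)) := by
        refine Finset.sum_congr rfl fun j hj => ?_
        have hja := Finset.mem_erase.1 hj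
        have hj1 : 1 ≤ j := (Finset.mem_Icc.1 hja.2).1
        have hjle : j ≤ L - 1 := (Finset.mem_Icc.1 hja.2).2
        rw [Function.update_of_ne hja.1, Function.update_of_ne (by omega : j - 1 ≠ L - 1)]
      rw [hRest, Function.update_self,
        Function.update_of_ne (by omega : L - 1 - 1 ≠ L - 1)]
      ring
    rw [hfun] at hbig
    have hg1 := hasGradientAt_log_gauss_y (hσ' _ hkmem)
      (g (L - 1) (W (L - 1)) (hhat (L - 1 - 1))) (hhat (L - 1))
    have hg2 : HasGradientAt (fun x => Real.log (πL (W L) x a))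
        (gradient (fun x => Real.log (πL (W L) x a)) (hhat (L - 1))) (hhat (L - 1)) :=
      (((hπLdiff₁ (W L) a) (hhat (L - 1))).log (hπLpos (W L) (hhat (L - 1)) a).ne').hasGradientAt
    have hG := (hg1.neg'.add' hg2.neg').add_const'
      (-(∑ j ∈ (Finset.Icc 1 (L - 1)).erase (L - 1),
          Real.log (gaussDensity (σ j) (g j (W j) (hhat (j - 1))) (hhat j))) + C)
    rw [hG.gradient] at hbig
    have hnn : -(-(σ (L - 1) ^ 2)⁻¹ • (hhat (L - 1) - g (L - 1) (W (L - 1)) (hhat (L - 1 - 1))))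
        = (σ (L - 1) ^ 2)⁻¹ • (hhat (L - 1) - g (L - 1) (W (L - 1)) (hhat (L - 1 - 1))) := by
      rw [neg_smul, neg_neg]
    rw [hnn, add_neg_eq_zero] at hbig
    exact hbig.symm
  constructor
  · -- first conjunct
    intro l hl
    obtain ⟨hl1, hl2⟩ := Finset.mem_Icc.1 hl
    have hL2 : 1 ≤ L - 1 := le_trans hl1 hl2
    obtain ⟨m, rfl⟩ : ∃ m, l = m + 1 := ⟨l - 1, by omega⟩
    show gradient (fun w => Real.log (gaussDensity (σ (m + 1)) (g (m + 1) w (hhat m))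
        (hhat (m + 1)))) (W (m + 1))
      = gradient (fun w : EuclideanSpace ℝ (Fin (dpar (m + 1))) => Real.log (πL (W L)
          (reparam n dpar g σ (Function.update W (m + 1) w) s zhat (L - 1)) a)) (W (m + 1))
    -- the chain of derivatives along the reparametrized forward pass
    have main : ∀ k, m + 1 ≤ k → k ≤ L - 1 →
        ∃ Φ : EuclideanSpace ℝ (Fin (dpar (m + 1))) →L[ℝ] EuclideanSpace ℝ (Fin (n k)),
          HasFDerivAt
            (fun w => reparam n dpar g σ (Function.update W (m + 1) w) s zhat k) Φ (W (m + 1)) ∧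
          Φ.adjoint ((σ k ^ 2)⁻¹ • (hhat k - g k (W k) (hhat (k - 1))))
            = (fderiv ℝ (fun w => g (m + 1) w (hhat m)) (W (m + 1))).adjoint
                ((σ (m + 1) ^ 2)⁻¹ • (hhat (m + 1) - g (m + 1) (W (m + 1)) (hhat m))) := by
      intro k hk
      induction k, hk using Nat.le_induction with
      | base =>
        intro hkle
        have hmem : m + 1 ∈ Finset.Icc 1 (L - 1) := Finset.mem_Icc.2 ⟨by omega, hkle⟩
        have hPfun : (fun w => reparam n dpar g σ (Function.update W (m + 1) w) s zhat (m + 1))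
            = fun w : EuclideanSpace ℝ (Fin (dpar (m + 1))) =>
                g (m + 1) w (hhat m) + σ (m + 1) • zhat (m + 1) := by
          funext w
          show g (m + 1) (Function.update W (m + 1) w (m + 1))
              (reparam n dpar g σ (Function.update W (m + 1) w) s zhat m)
              + σ (m + 1) • zhat (m + 1) = _
          rw [Function.update_self,
            reparamW (Function.update W (m + 1) w) m (by omega)
              (fun j h1 h2 => Function.update_of_ne (by omega) _ _)]
        refine ⟨fderiv ℝ (fun w => g (m + 1) w (hhat m)) (W (m + 1)), ?_, rfl⟩
        rw [hPfun]
        exact (((hgdiff₂ (m + 1) hmem (hhat m)) (W (m + 1))).hasFDerivAt).add_const _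
      | succ k hk ih =>
        intro hkle
        obtain ⟨Φ, hΦ, hadj⟩ := ih (by omega)
        have hk1mem : k + 1 ∈ Finset.Icc 1 (L - 1) := Finset.mem_Icc.2 ⟨by omega, hkle⟩
        have hPk : reparam n dpar g σ (Function.update W (m + 1) (W (m + 1))) s zhat k
            = hhat k := by
          rw [Function.update_eq_self]
          exact reparamW W k (by omega) (fun _ _ _ => rfl)
        have hPfun : (fun w => reparam n dpar g σ (Function.update W (m + 1) w) s zhat (k + 1))
            = fun w : EuclideanSpace ℝ (Fin (dpar (m + 1))) =>
                g (k + 1) (W (k + 1))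
                  (reparam n dpar g σ (Function.update W (m + 1) w) s zhat k)
                + σ (k + 1) • zhat (k + 1) := by
          funext w
          show g (k + 1) (Function.update W (m + 1) w (k + 1))
              (reparam n dpar g σ (Function.update W (m + 1) w) s zhat k)
              + σ (k + 1) • zhat (k + 1) = _
          rw [Function.update_of_ne (by omega : k + 1 ≠ m + 1)]
        refine ⟨(fderiv ℝ (g (k + 1) (W (k + 1)))
          (reparam n dpar g σ (Function.update W (m + 1) (W (m + 1))) s zhat k)).comp Φ, ?_, ?_⟩
        · rw [hPfun]
          exact ((((hgdiff₁ (k + 1) hk1mem (W (k + 1)))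
            (reparam n dpar g σ (Function.update W (m + 1) (W (m + 1))) s zhat k)).hasFDerivAt.comp
              (W (m + 1)) hΦ).add_const _)
        · rw [hPk, ContinuousLinearMap.adjoint_comp, ContinuousLinearMap.comp_apply]
          show (ContinuousLinearMap.adjoint Φ)
              ((ContinuousLinearMap.adjoint (fderiv ℝ (g (k + 1) (W (k + 1))) (hhat k)))
                ((σ (k + 1) ^ 2)⁻¹ • (hhat (k + 1) - g (k + 1) (W (k + 1)) (hhat k)))) = _
          rw [hrec k (by omega) hkle]
          exact hadj
    obtain ⟨Φ, hΦ, hadj⟩ := main (L - 1) hl2 le_rfl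
    have hP : reparam n dpar g σ (Function.update W (m + 1) (W (m + 1))) s zhat (L - 1)
        = hhat (L - 1) := by
      rw [Function.update_eq_self]
      exact reparamW W (L - 1) le_rfl (fun _ _ _ => rfl)
    have hgrad : HasGradientAt (fun x => Real.log (πL (W L) x a))
        (gradient (fun x => Real.log (πL (W L) x a)) (hhat (L - 1)))
        (reparam n dpar g σ (Function.update W (m + 1) (W (m + 1))) s zhat (L - 1)) := by
      rw [hP]
      exact (((hπLdiff₁ (W L) a) (hhat (L - 1))).log
        (hπLpos (W L) (hhat (L - 1)) a).ne').hasGradientAt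
    have hR := HasGradientAt.comp_hasFDerivAt' hΦ hgrad
    have hLft := HasGradientAt.comp_hasFDerivAt'
      (((hgdiff₂ (m + 1) hl (hhat m)) (W (m + 1))).hasFDerivAt)
      (hasGradientAt_log_gauss_mu (hσ' _ hl) (hhat (m + 1)) (g (m + 1) (W (m + 1)) (hhat m)))
    rw [hLft.gradient, hR.gradient, hlast hL2, hadj]
  · -- second conjunct
    rw [reparamW W (L - 1) le_rfl (fun _ _ _ => rfl)]
end

section
/- In the single-time-step setting, for every l ∈ {1, …, L}, ∇_{W^l} E[G] = E[G · E[∇_{W^l} log π_l(H^{l-1}, H^l; W^l) | S, A]]; that is, the learning rule that updates layer l by the return times the conditional expectation of the layer's score given the state and the selected action follows the gradient of the expected return. -/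
open scoped Classical

noncomputable section

section Helpers

variable {F : Type*} [NormedAddCommGroup F] [InnerProductSpace ℝ F] [CompleteSpace F]

lemma hasGradientAt_finset_sum {ι : Type*} {s : Finset ι} {f : ι → F → ℝ} {g : ι → F} {x : F}
    (h : ∀ i ∈ s, HasGradientAt (f i) (g i) x) :
    HasGradientAt (fun y => ∑ i ∈ s, f i y) (∑ i ∈ s, g i) x := by
  simp only [hasGradientAt_iff_hasFDerivAt] at h ⊢
  simpa [map_sum] using HasFDerivAt.fun_sum h

lemma hasGradientAt_const_mul {f : F → ℝ} {g x : F} (c : ℝ) (h : HasGradientAt f g x) :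
    HasGradientAt (fun y => c * f y) (c • g) x := by
  simp only [hasGradientAt_iff_hasFDerivAt] at h ⊢
  simpa [map_smul] using h.const_mul c

lemma hasGradientAt_log {f : F → ℝ} {g x : F} (h : HasGradientAt f g x) (hfx : f x ≠ 0) :
    HasGradientAt (fun y => Real.log (f y)) ((f x)⁻¹ • g) x := by
  simp only [hasGradientAt_iff_hasFDerivAt] at h ⊢
  simpa [map_smul] using h.log hfx

lemma pr_zero_imp {Ω : Type*} [Fintype Ω] {p : Ω → ℝ} (hp0 : ∀ ω, 0 ≤ p ω)
    {E : Ω → Prop} (h : pr p E = 0) : ∀ ω, E ω → p ω = 0 := by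
  intro ω hω
  have := (Finset.sum_eq_zero_iff_of_nonneg (fun ω _ => by
    by_cases hE : E ω <;> simp [hE, hp0 ω])).mp h ω (Finset.mem_univ ω)
  simpa [hω] using this

lemma ite_irrel {α : Sort*} {P Q : Prop} (hPQ : P = Q) {h1 : Decidable P} {h2 : Decidable Q}
    {x y : α} : @ite α P h1 x y = @ite α Q h2 x y := by
  subst hPQ
  cases Subsingleton.elim h1 h2
  rfl

end Helpers

/-- Single-time-step setting: a multi-layer network of stochastic units
(`H^0 = S`, `H^L = A`, layer conditionals `π_l` strictly positive, normalized and
differentiable in `W^l`, layers forming a Markov chain, the distribution of `S` not depending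
on the parameters), a return `G` conditionally independent of the hidden layers given
`(S, A)` with `E[G | S = s, A = a] = R(s, a)` a fixed reward function.  The expected return,
as a function of the parameters, is
`J(V) = ∑_τ P(S = τ⁰) (∏_{k=1}^L π_k(τ^{k-1}, τ^k; V^k)) R(τ⁰, τ^L)`.  Then for every
`l ∈ {1, …, L}`,
`∇_{W^l} E[G] = E[G · E[∇_{W^l} log π_l(H^{l-1}, H^l; W^l) | S, A]]`. -/
theorem stmt11 (Ω : Type*) [Fintype Ω] (p : Ω → ℝ)
    (hp0 : ∀ ω, 0 ≤ p ω) (hp1 : ∑ ω, p ω = 1)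
    (L : ℕ) (hL : 1 ≤ L) (T : ℕ → Type*) [∀ l, Fintype (T l)] [∀ l, Nonempty (T l)]
    (d : ℕ → ℕ)
    (π : (l : ℕ) → T (l - 1) → T l → EuclideanSpace ℝ (Fin (d l)) → ℝ)
    (W : (l : ℕ) → EuclideanSpace ℝ (Fin (d l)))
    (H : (l : ℕ) → Ω → T l) (G : Ω → ℝ) (R : T 0 → T L → ℝ)
    (hpos : ∀ l ∈ Finset.Icc 1 L, ∀ x y w, 0 < π l x y w)
    (hdiff : ∀ l ∈ Finset.Icc 1 L, ∀ x y, Differentiable ℝ (π l x y))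
    (hnorm : ∀ l ∈ Finset.Icc 1 L, ∀ x w, ∑ y, π l x y w = 1)
    (hMarkov : ∀ τ : ((l : Fin (L + 1)) → T l.1),
      pr p (fun ω => ∀ l : Fin (L + 1), H l.1 ω = τ l)
        = pr p (fun ω => H 0 ω = τ ⟨0, Nat.succ_pos L⟩) *
            ∏ l : Fin L, π (l.1 + 1) (τ l.castSucc) (τ l.succ) (W (l.1 + 1)))
    (hG : ∀ τ : ((l : Fin (L + 1)) → T l.1),
      pr p (fun ω => ∀ l : Fin (L + 1), H l.1 ω = τ l) ≠ 0 →
        condExp p G (fun ω => ∀ l : Fin (L + 1), H l.1 ω = τ l)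
          = condExp p G (fun ω => H 0 ω = τ ⟨0, Nat.succ_pos L⟩ ∧ H L ω = τ (Fin.last L)))
    (hR : ∀ s a, pr p (fun ω => H 0 ω = s ∧ H L ω = a) ≠ 0 →
      R s a = condExp p G (fun ω => H 0 ω = s ∧ H L ω = a))
    (l : ℕ) (hl : l ∈ Finset.Icc 1 L) :
    gradient (fun w : EuclideanSpace ℝ (Fin (d l)) =>
        ∑ τ : ((k : Fin (L + 1)) → T k.1),
          pr p (fun ω => H 0 ω = τ ⟨0, Nat.succ_pos L⟩) *
            (∏ k : Fin L, π (k.1 + 1) (τ k.castSucc) (τ k.succ)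
              (Function.update W l w (k.1 + 1))) *
            R (τ ⟨0, Nat.succ_pos L⟩) (τ (Fin.last L))) (W l)
      = ∑ ω, (p ω * G ω) •
          condExpVec p
            (fun ω' => gradient (fun w => Real.log (π l (H (l - 1) ω') (H l ω') w)) (W l))
            (fun ω' => H 0 ω' = H 0 ω ∧ H L ω' = H L ω) := by
  obtain ⟨hl1, hlL⟩ := Finset.mem_Icc.mp hl
  obtain ⟨m, rfl⟩ : ∃ m, l = m + 1 := ⟨l - 1, by omega⟩
  change _ = ∑ ω, (p ω * G ω) • condExpVec p (fun ω' => gradient (fun w => Real.log (π (m + 1) (H m ω') (H (m + 1) ω') w)) (W (m + 1))) (fun ω' => H 0 ω' = H 0 ω ∧ H L ω' = H L ω)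
  set k0 : Fin L := ⟨m, by omega⟩ with hk0
  -- basic facts about π at level m+1
  have hπpos : ∀ x y w, 0 < π (m + 1) x y w := hpos (m + 1) hl
  have hπdiff : ∀ x y, Differentiable ℝ (π (m + 1) x y) := hdiff (m + 1) hl
  -- abbreviations
  set TE : ((k : Fin (L + 1)) → T k.1) → Ω → Prop :=
    fun τ ω => ∀ k : Fin (L + 1), H k.1 ω = τ k with hTE
  set Sg : ((k : Fin (L + 1)) → T k.1) → EuclideanSpace ℝ (Fin (d (m + 1))) :=
    fun τ => gradient
      (fun w => Real.log (π (m + 1) (τ k0.castSucc) (τ k0.succ) w)) (W (m + 1)) with hSg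
  set Dg : ((k : Fin (L + 1)) → T k.1) → EuclideanSpace ℝ (Fin (d (m + 1))) :=
    fun τ => gradient (fun w => π (m + 1) (τ k0.castSucc) (τ k0.succ) w) (W (m + 1)) with hDg
  set C : ((k : Fin (L + 1)) → T k.1) → ℝ :=
    fun τ => ∏ k ∈ Finset.univ.erase k0,
      π (k.1 + 1) (τ k.castSucc) (τ k.succ) (W (k.1 + 1)) with hC
  set P0 : ((k : Fin (L + 1)) → T k.1) → ℝ :=
    fun τ => pr p (fun ω => H 0 ω = τ ⟨0, Nat.succ_pos L⟩) with hP0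
  set Rt : ((k : Fin (L + 1)) → T k.1) → ℝ :=
    fun τ => R (τ ⟨0, Nat.succ_pos L⟩) (τ (Fin.last L)) with hRt
  -- factorization of the probability of a trajectory
  have hfact : ∀ τ, pr p (TE τ)
      = P0 τ * (π (m + 1) (τ k0.castSucc) (τ k0.succ) (W (m + 1)) * C τ) := by
    intro τ
    rw [hMarkov τ, ← Finset.mul_prod_erase Finset.univ _ (Finset.mem_univ k0)]
  -- the score as a rescaled gradient
  have hscore : ∀ τ, Sg τ = (π (m + 1) (τ k0.castSucc) (τ k0.succ) (W (m + 1)))⁻¹ • Dg τ := by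
    intro τ
    exact (hasGradientAt_log ((hπdiff _ _ (W (m + 1))).hasGradientAt)
      (hπpos _ _ _).ne').gradient
  -- per-trajectory gradient
  have hgrad : ∀ τ : ((k : Fin (L + 1)) → T k.1), HasGradientAt
      (fun w : EuclideanSpace ℝ (Fin (d (m + 1))) =>
        P0 τ * (∏ k : Fin L, π (k.1 + 1) (τ k.castSucc) (τ k.succ)
          (Function.update W (m + 1) w (k.1 + 1))) * Rt τ)
      ((pr p (TE τ) * Rt τ) • Sg τ) (W (m + 1)) := by
    intro τ
    have hfun : ∀ w : EuclideanSpace ℝ (Fin (d (m + 1))),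
        P0 τ * (∏ k : Fin L, π (k.1 + 1) (τ k.castSucc) (τ k.succ)
          (Function.update W (m + 1) w (k.1 + 1))) * Rt τ
        = (P0 τ * C τ * Rt τ) * π (m + 1) (τ k0.castSucc) (τ k0.succ) w := by
      intro w
      rw [← Finset.mul_prod_erase Finset.univ _ (Finset.mem_univ k0)]
      have h1 : Function.update W (m + 1) w (k0.1 + 1) = w := Function.update_self _ _ _
      have h2 : ∀ k ∈ Finset.univ.erase k0,
          π (k.1 + 1) (τ k.castSucc) (τ k.succ) (Function.update W (m + 1) w (k.1 + 1))
          = π (k.1 + 1) (τ k.castSucc) (τ k.succ) (W (k.1 + 1)) := by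
        intro k hk
        have hne : (k : ℕ) ≠ m := fun h => (Finset.mem_erase.mp hk).1 (Fin.ext h)
        rw [Function.update_of_ne (by omega)]
      rw [Finset.prod_congr rfl h2, h1]
      ring
    have hg : HasGradientAt
        (fun w : EuclideanSpace ℝ (Fin (d (m + 1))) =>
          (P0 τ * C τ * Rt τ) * π (m + 1) (τ k0.castSucc) (τ k0.succ) w)
        ((P0 τ * C τ * Rt τ) • Dg τ) (W (m + 1)) :=
      hasGradientAt_const_mul _ ((hπdiff _ _ (W (m + 1))).hasGradientAt)
    have heq : (P0 τ * C τ * Rt τ) • Dg τ = (pr p (TE τ) * Rt τ) • Sg τ := by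
      rw [hscore τ, hfact τ, smul_smul]
      congr 1
      have hπne : π (m + 1) (τ k0.castSucc) (τ k0.succ) (W (m + 1)) ≠ 0 := (hπpos _ _ _).ne'
      field_simp
    rw [← heq]
    exact hg.congr_of_eventuallyEq (Filter.Eventually.of_forall hfun)
  -- compute the LHS
  have hLHS : gradient (fun w : EuclideanSpace ℝ (Fin (d (m + 1))) =>
        ∑ τ : ((k : Fin (L + 1)) → T k.1),
          pr p (fun ω => H 0 ω = τ ⟨0, Nat.succ_pos L⟩) *
            (∏ k : Fin L, π (k.1 + 1) (τ k.castSucc) (τ k.succ)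
              (Function.update W (m + 1) w (k.1 + 1))) *
            R (τ ⟨0, Nat.succ_pos L⟩) (τ (Fin.last L))) (W (m + 1))
      = ∑ τ : ((k : Fin (L + 1)) → T k.1), (pr p (TE τ) * Rt τ) • Sg τ :=
    (hasGradientAt_finset_sum fun τ _ => hgrad τ).gradient
  rw [hLHS]
  -- ====== RHS ======
  set Sc : Ω → EuclideanSpace ℝ (Fin (d (m + 1))) :=
    fun ω' => gradient (fun w => Real.log (π (m + 1) (H m ω') (H (m + 1) ω') w))
      (W (m + 1)) with hSc
  have hSgH : ∀ ω, Sg (fun k : Fin (L + 1) => H k.1 ω) = Sc ω := fun ω => rfl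
  set Ev : T 0 → T L → Ω → Prop := fun s aa ω => H 0 ω = s ∧ H L ω = aa with hEv
  set N : T 0 → T L → ℝ := fun s aa => ∑ ω, if Ev s aa ω then p ω * G ω else 0 with hN
  -- conditional "numerator" rewritten as a sum over trajectories
  have hMsum : ∀ s aa, (∑ ω, if Ev s aa ω then p ω • Sc ω else 0)
      = ∑ τ : ((k : Fin (L + 1)) → T k.1),
          if τ ⟨0, Nat.succ_pos L⟩ = s ∧ τ (Fin.last L) = aa
            then pr p (TE τ) • Sg τ else 0 := by
    intro s aa
    symm
    calc (∑ τ : ((k : Fin (L + 1)) → T k.1),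
            if τ ⟨0, Nat.succ_pos L⟩ = s ∧ τ (Fin.last L) = aa
              then pr p (TE τ) • Sg τ else 0)
        = ∑ τ : ((k : Fin (L + 1)) → T k.1), ∑ ω,
            if (τ ⟨0, Nat.succ_pos L⟩ = s ∧ τ (Fin.last L) = aa) ∧ TE τ ω
              then p ω • Sg τ else 0 := by
          refine Finset.sum_congr rfl fun τ _ => ?_
          by_cases h : τ ⟨0, Nat.succ_pos L⟩ = s ∧ τ (Fin.last L) = aa
          · rw [if_pos h]
            simp only [pr, Finset.sum_smul]
            refine Finset.sum_congr rfl fun ω _ => ?_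
            rw [ite_smul, zero_smul]
            exact (ite_irrel (propext (and_iff_right h))).symm
          · rw [if_neg h]
            symm
            refine Finset.sum_eq_zero fun ω _ => ?_
            rw [if_neg]
            tauto
      _ = ∑ ω, ∑ τ : ((k : Fin (L + 1)) → T k.1),
            if (τ ⟨0, Nat.succ_pos L⟩ = s ∧ τ (Fin.last L) = aa) ∧ TE τ ω
              then p ω • Sg τ else 0 := Finset.sum_comm
      _ = ∑ ω, if Ev s aa ω then p ω • Sc ω else 0 := by
          refine Finset.sum_congr rfl fun ω _ => ?_
          rw [Fintype.sum_eq_single (fun k : Fin (L + 1) => H k.1 ω)]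
          · by_cases h : Ev s aa ω
            · rw [if_pos ⟨⟨h.1, h.2⟩, fun k => rfl⟩, if_pos h, hSgH]
            · rw [if_neg (fun hc => h ⟨hc.1.1, hc.1.2⟩), if_neg h]
          · intro τ hτ
            rw [if_neg]
            rintro ⟨-, hT⟩
            exact hτ (funext fun k => (hT k).symm)
  -- the per-(state, action) term
  have hterm : ∀ s aa, N s aa • condExpVec p Sc (Ev s aa)
      = ∑ τ : ((k : Fin (L + 1)) → T k.1),
          if τ ⟨0, Nat.succ_pos L⟩ = s ∧ τ (Fin.last L) = aa
            then (pr p (TE τ) * Rt τ) • Sg τ else 0 := by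
    intro s aa
    by_cases hP : pr p (Ev s aa) = 0
    · have hpz := pr_zero_imp hp0 hP
      have hTz : ∀ τ : ((k : Fin (L + 1)) → T k.1),
          τ ⟨0, Nat.succ_pos L⟩ = s ∧ τ (Fin.last L) = aa → pr p (TE τ) = 0 := by
        rintro τ ⟨h0, h1⟩
        refine Finset.sum_eq_zero fun ω _ => ?_
        by_cases hT : TE τ ω
        · rw [if_pos hT]
          exact hpz ω ⟨(hT ⟨0, Nat.succ_pos L⟩).trans h0, (hT (Fin.last L)).trans h1⟩
        · rw [if_neg hT]
      have hN0 : N s aa = 0 := Finset.sum_eq_zero fun ω _ => by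
        by_cases hE : Ev s aa ω
        · rw [if_pos hE, hpz ω hE, zero_mul]
        · rw [if_neg hE]
      rw [hN0, zero_smul]
      symm
      refine Finset.sum_eq_zero fun τ _ => ?_
      by_cases h : τ ⟨0, Nat.succ_pos L⟩ = s ∧ τ (Fin.last L) = aa
      · rw [if_pos h, hTz τ h, zero_mul, zero_smul]
      · rw [if_neg h]
    · have hNR : N s aa = pr p (Ev s aa) * R s aa := by
        rw [hR s aa hP, condExp]
        field_simp [hN]
        rw [mul_div_cancel_left₀ _ (show (pr p fun ω => H 0 ω = s ∧ H L ω = aa) ≠ 0 from hP)]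
      calc N s aa • condExpVec p Sc (Ev s aa)
          = (pr p (Ev s aa) * R s aa * (pr p (Ev s aa))⁻¹) •
              (∑ ω, if Ev s aa ω then p ω • Sc ω else 0) := by
            rw [hNR, condExpVec, smul_smul]
            exact congrArg _ (Finset.sum_congr rfl fun ω _ => ite_irrel rfl)
        _ = R s aa • ∑ τ : ((k : Fin (L + 1)) → T k.1),
              (if τ ⟨0, Nat.succ_pos L⟩ = s ∧ τ (Fin.last L) = aa
                then pr p (TE τ) • Sg τ else 0) := by
            rw [hMsum s aa]
            congr 1
            field_simp
        _ = ∑ τ : ((k : Fin (L + 1)) → T k.1),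
              if τ ⟨0, Nat.succ_pos L⟩ = s ∧ τ (Fin.last L) = aa
                then (pr p (TE τ) * Rt τ) • Sg τ else 0 := by
            rw [Finset.smul_sum]
            refine Finset.sum_congr rfl fun τ _ => ?_
            by_cases h : τ ⟨0, Nat.succ_pos L⟩ = s ∧ τ (Fin.last L) = aa
            · rw [if_pos h, if_pos h, smul_smul]
              congr 1
              obtain ⟨h0, h1⟩ := h
              simp only [hRt]
              rw [h0, h1]
              ring
            · rw [if_neg h, if_neg h, smul_zero]
  -- assemble
  calc ∑ τ : ((k : Fin (L + 1)) → T k.1), (pr p (TE τ) * Rt τ) • Sg τ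
      = ∑ τ : ((k : Fin (L + 1)) → T k.1), ∑ s : T 0, ∑ aa : T L,
          (if τ ⟨0, Nat.succ_pos L⟩ = s ∧ τ (Fin.last L) = aa
            then (pr p (TE τ) * Rt τ) • Sg τ else 0) := by
        refine Finset.sum_congr rfl fun τ _ => ?_
        symm
        have h1 : ∀ s : T 0, s ≠ τ ⟨0, Nat.succ_pos L⟩ → (∑ aa : T L, if τ ⟨0, Nat.succ_pos L⟩ = s ∧ τ (Fin.last L) = aa then (pr p (TE τ) * Rt τ) • Sg τ else 0) = 0 :=
          fun s hs => Finset.sum_eq_zero fun aa _ => if_neg fun h => hs h.1.symm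
        have h2 : ∀ aa : T L, aa ≠ τ (Fin.last L) → (if τ ⟨0, Nat.succ_pos L⟩ = τ ⟨0, Nat.succ_pos L⟩ ∧ τ (Fin.last L) = aa then (pr p (TE τ) * Rt τ) • Sg τ else 0) = 0 :=
          fun aa ha => if_neg fun h => ha h.2.symm
        rw [Fintype.sum_eq_single _ h1, Fintype.sum_eq_single _ h2, if_pos ⟨rfl, rfl⟩]
    _ = ∑ s : T 0, ∑ aa : T L, ∑ τ : ((k : Fin (L + 1)) → T k.1),
          (if τ ⟨0, Nat.succ_pos L⟩ = s ∧ τ (Fin.last L) = aa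
            then (pr p (TE τ) * Rt τ) • Sg τ else 0) := by
        rw [Finset.sum_comm]
        exact Finset.sum_congr rfl fun s _ => Finset.sum_comm
    _ = ∑ s : T 0, ∑ aa : T L, N s aa • condExpVec p Sc (Ev s aa) :=
        Finset.sum_congr rfl fun s _ => Finset.sum_congr rfl fun aa _ => (hterm s aa).symm
    _ = ∑ s : T 0, ∑ aa : T L, ∑ ω,
          (if Ev s aa ω then (p ω * G ω) • condExpVec p Sc (Ev s aa) else 0) := by
        refine Finset.sum_congr rfl fun s _ => Finset.sum_congr rfl fun aa _ => ?_
        simp only [hN, Finset.sum_smul]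
        refine Finset.sum_congr rfl fun ω _ => ?_
        rw [ite_smul, zero_smul]
    _ = ∑ ω, ∑ s : T 0, ∑ aa : T L,
          (if Ev s aa ω then (p ω * G ω) • condExpVec p Sc (Ev s aa) else 0) := by
        symm
        rw [Finset.sum_comm]
        exact Finset.sum_congr rfl fun s _ => Finset.sum_comm
    _ = ∑ ω, (p ω * G ω) • condExpVec p Sc (Ev (H 0 ω) (H L ω)) := by
        refine Finset.sum_congr rfl fun ω _ => ?_
        simp [hEv, ite_and, Finset.sum_ite_eq]
    _ = ∑ ω, (p ω * G ω) •
          condExpVec p Sc (fun ω' => H 0 ω' = H 0 ω ∧ H L ω' = H L ω) :=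
        Finset.sum_congr rfl fun ω _ => rfl

end
end
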